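/- Let s ∈ (1/2, 3/2) and q₀ ∈ (0, 1/4). Define F = ∫₀^∞ η^{2s-2} | q₀(η sin η − q₀ cos η)/(q₀² + η²) + sin(η)/η |² dη. Then F ≥ (π^{2s-2}/(π²(2s−1)))·(2^{1-2s} − 4^{1-2s}). -/

import Mathlib

set_option maxHeartbeats 1000000


open Real Set MeasureTheory

theorem F_lower_bound (s q : ℝ) (hs : s ∈ Set.Ioo (1 / 2 : ℝ) (3 / 2))
    (hq : q ∈ Set.Ioo (0 : ℝ) (1 / 4)) :
    (∫ η in Set.Ioi (0 : ℝ),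
        η ^ (2 * s - 2) *
          |q * (η * Real.sin η - q * Real.cos η) / (q ^ 2 + η ^ 2)
            + Real.sin η / η| ^ 2) ≥
      π ^ (2 * s - 2) / (π ^ 2 * (2 * s - 1)) *
        ((2 : ℝ) ^ (1 - 2 * s) - (4 : ℝ) ^ (1 - 2 * s)) := by
  obtain ⟨hs1, hs2⟩ := hs
  obtain ⟨hq1, hq2⟩ := hq
  have hπ : (0:ℝ) < π := pi_pos
  have hπ3 : (3:ℝ) < π := pi_gt_three
  set g : ℝ → ℝ := fun η =>
    q * (η * Real.sin η - q * Real.cos η) / (q ^ 2 + η ^ 2) + Real.sin η / η with hg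
  set f : ℝ → ℝ := fun η => η ^ (2 * s - 2) * |g η| ^ 2 with hf
  -- denominators positive
  have hden : ∀ η : ℝ, (0:ℝ) < q ^ 2 + η ^ 2 := fun η => by positivity
  -- continuity of f on Ioi 0
  have hcont : ContinuousOn f (Ioi 0) := by
    apply ContinuousOn.mul
    · exact continuousOn_id.rpow_const (fun x hx => Or.inl (ne_of_gt hx))
    · apply ContinuousOn.pow
      apply ContinuousOn.abs
      apply ContinuousOn.add
      · exact ContinuousOn.div (by fun_prop) (by fun_prop)
          (fun x _ => ne_of_gt (hden x))
      · exact ContinuousOn.div Real.continuousOn_sin continuousOn_id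
          (fun x hx => ne_of_gt hx)
  have hmeas : AEStronglyMeasurable f (volume.restrict (Ioi (0:ℝ))) :=
    hcont.aestronglyMeasurable measurableSet_Ioi
  -- f is nonneg on Ioi 0
  have hfnn : ∀ η : ℝ, 0 < η → 0 ≤ f η := by
    intro η hη
    have : (0:ℝ) ≤ η ^ (2*s-2) := Real.rpow_nonneg hη.le _
    positivity
  -- pointwise bound |g η| ≤ 5/2 for η > 0
  have habs1 : ∀ η : ℝ, 0 < η → |g η| ≤ 5/2 := by
    intro η hη
    have h1 : |q * (η * Real.sin η - q * Real.cos η) / (q ^ 2 + η ^ 2)| ≤ 3/2 := by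
      rw [abs_div, abs_of_pos (hden η), div_le_iff₀ (hden η), abs_mul,
        abs_of_pos hq1]
      have h2 : |η * Real.sin η - q * Real.cos η| ≤ η + q := by
        have := abs_sub (η * Real.sin η) (q * Real.cos η)
        have hs1 : |η * Real.sin η| ≤ η := by
          rw [abs_mul, abs_of_pos hη]
          nlinarith [Real.abs_sin_le_one η, abs_nonneg (Real.sin η)]
        have hc1 : |q * Real.cos η| ≤ q := by
          rw [abs_mul, abs_of_pos hq1]
          nlinarith [Real.abs_cos_le_one η, abs_nonneg (Real.cos η)]
        calc |η * Real.sin η - q * Real.cos η|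
            ≤ |η * Real.sin η| + |q * Real.cos η| := abs_sub _ _
          _ ≤ η + q := by linarith
      nlinarith [sq_nonneg (q - η), abs_nonneg (η * Real.sin η - q * Real.cos η)]
    have h3 : |Real.sin η / η| ≤ 1 := by
      rw [abs_div, abs_of_pos hη, div_le_one hη]
      rcases le_or_gt 1 η with h | h
      · exact le_trans (Real.abs_sin_le_one η) h
      · have hπη : η < π := by nlinarith
        have hsp : 0 < Real.sin η := Real.sin_pos_of_pos_of_lt_pi hη hπη
        have hsl := Real.sin_lt hη
        rw [abs_of_pos hsp]; linarith
    calc |g η| ≤ |q * (η * Real.sin η - q * Real.cos η) / (q ^ 2 + η ^ 2)| + |Real.sin η / η| :=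
          abs_add_le _ _
      _ ≤ 5/2 := by linarith
  -- integrable on Ioc 0 1
  have hint1 : IntegrableOn f (Ioc (0:ℝ) 1) := by
    have hg7 : IntegrableOn (fun η : ℝ => 7 * η ^ (2*s-2)) (Ioc (0:ℝ) 1) := by
      have h := intervalIntegral.intervalIntegrable_rpow' (a := 0) (b := 1)
        (r := 2*s-2) (by linarith)
      rw [intervalIntegrable_iff_integrableOn_Ioc_of_le zero_le_one] at h
      exact h.const_mul 7
    refine Integrable.mono hg7 (hmeas.mono_set Ioc_subset_Ioi_self) ?_
    rw [ae_restrict_iff' measurableSet_Ioc]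
    filter_upwards with η
    intro hη
    have hη0 : 0 < η := hη.1
    rw [Real.norm_of_nonneg (hfnn η hη0),
      Real.norm_of_nonneg (by positivity : (0:ℝ) ≤ 7 * η ^ (2*s-2))]
    have h1 : |g η| ^ 2 ≤ 7 := by nlinarith [habs1 η hη0, abs_nonneg (g η)]
    have h2 : (0:ℝ) ≤ η ^ (2*s-2) := Real.rpow_nonneg hη0.le _
    calc f η = η ^ (2*s-2) * |g η| ^ 2 := rfl
      _ ≤ η ^ (2*s-2) * 7 := by nlinarith
      _ = 7 * η ^ (2*s-2) := by ring
  -- integrable on Ioi 1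
  have hint2 : IntegrableOn f (Ioi (1:ℝ)) := by
    have hg4 : IntegrableOn (fun η : ℝ => 4 * η ^ (2*s-4)) (Ioi (1:ℝ)) := by
      exact (integrableOn_Ioi_rpow_of_lt (by linarith) one_pos).const_mul 4
    refine Integrable.mono hg4 (hmeas.mono_set (show Ioi (1:ℝ) ⊆ Ioi 0 from fun x (hx : (1:ℝ) < x) => (lt_trans one_pos hx : (0:ℝ) < x))) ?_
    rw [ae_restrict_iff' measurableSet_Ioi]
    filter_upwards with η
    intro hη
    have hη1 : (1:ℝ) < η := hη
    have hη0 : (0:ℝ) < η := lt_trans one_pos hη1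
    rw [Real.norm_of_nonneg (hfnn η hη0),
      Real.norm_of_nonneg (by positivity : (0:ℝ) ≤ 4 * η ^ (2*s-4))]
    -- |g η| ≤ 2/η
    have habs2 : |g η| ≤ 2/η := by
      have h1 : |q * (η * Real.sin η - q * Real.cos η) / (q ^ 2 + η ^ 2)| ≤ 1/η := by
        rw [abs_div, abs_of_pos (hden η), div_le_div_iff₀ (hden η) hη0, abs_mul,
          abs_of_pos hq1]
        have h2 : |η * Real.sin η - q * Real.cos η| ≤ η + q := by
          have hs1 : |η * Real.sin η| ≤ η := by
            rw [abs_mul, abs_of_pos hη0]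
            nlinarith [Real.abs_sin_le_one η, abs_nonneg (Real.sin η)]
          have hc1 : |q * Real.cos η| ≤ q := by
            rw [abs_mul, abs_of_pos hq1]
            nlinarith [Real.abs_cos_le_one η, abs_nonneg (Real.cos η)]
          calc |η * Real.sin η - q * Real.cos η|
              ≤ |η * Real.sin η| + |q * Real.cos η| := abs_sub _ _
            _ ≤ η + q := by linarith
        -- q*(η+q)*η ≤ q²+η² since q ≤ 1/4, η ≥ 1
        have e0 : q * |η * Real.sin η - q * Real.cos η| * η ≤ q * (η + q) * η := by
          have := mul_le_mul_of_nonneg_left h2 hq1.le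
          nlinarith
        have e1 : q * η^2 ≤ (1/4) * η^2 := by nlinarith [sq_nonneg η]
        have e2 : q^2 * η ≤ (1/16) * η := by nlinarith
        have e3 : (1/16) * η ≤ (1/16) * η^2 := by nlinarith
        nlinarith [e0, e1, e2, e3]
      have h3 : |Real.sin η / η| ≤ 1/η := by
        rw [abs_div, abs_of_pos hη0, div_le_div_iff₀ hη0 hη0]
        nlinarith [Real.abs_sin_le_one η, abs_nonneg (Real.sin η)]
      calc |g η| ≤ |q * (η * Real.sin η - q * Real.cos η) / (q ^ 2 + η ^ 2)| + |Real.sin η / η| :=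
            abs_add_le _ _
        _ ≤ 2/η := by rw [show (2:ℝ)/η = 1/η + 1/η by ring]; linarith
    have h4 : η ^ (2*s-4) = η ^ (2*s-2) / η^2 := by
      rw [show (2*s-4 : ℝ) = (2*s-2) - 2 by ring, Real.rpow_sub hη0]
      norm_num [Real.rpow_two]
    have h5 : (0:ℝ) ≤ η ^ (2*s-2) := Real.rpow_nonneg hη0.le _
    have h6 : |g η| ^ 2 ≤ 4/η^2 := by
      have := habs2
      have h7 : (0:ℝ) ≤ |g η| := abs_nonneg _
      have : |g η|^2 ≤ (2/η)^2 := by nlinarith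
      calc |g η|^2 ≤ (2/η)^2 := this
        _ = 4/η^2 := by field_simp; ring
    calc f η = η ^ (2*s-2) * |g η| ^ 2 := rfl
      _ ≤ η ^ (2*s-2) * (4/η^2) := by nlinarith
      _ = 4 * η ^ (2*s-4) := by rw [h4]; ring
  have hintIoi : IntegrableOn f (Ioi (0:ℝ)) := by
    rw [show Ioi (0:ℝ) = Ioc 0 1 ∪ Ioi 1 from (Ioc_union_Ioi_eq_Ioi zero_le_one).symm]
    exact hint1.union hint2
  -- the subinterval
  set a : ℝ := π/4 with ha
  set b : ℝ := π/2 with hb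
  have hab : a ≤ b := by rw [ha, hb]; linarith
  have ha0 : 0 < a := by positivity
  -- pointwise lower bound on [a,b]
  have hlow : ∀ η ∈ Ioc a b, π⁻¹ * π⁻¹ * η ^ (2*s-2) ≤ f η := by
    intro η hη
    have hηa : a < η := hη.1
    have hηb : η ≤ b := hη.2
    have hη0 : 0 < η := lt_trans ha0 hηa
    have hsin : 2/π * η ≤ Real.sin η := Real.mul_le_sin hη0.le (by rw [hb] at hηb; linarith)
    have hsin2 : (1:ℝ)/2 ≤ Real.sin η := by
      have : 2/π * η > 2/π * (π/4) := by
        apply mul_lt_mul_of_pos_left _ (by positivity)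
        rw [ha] at hηa; exact hηa
      have h2 : 2/π * (π/4) = 1/2 := by field_simp; ring
      linarith
    have hcos0 : 0 ≤ Real.cos η := Real.cos_nonneg_of_mem_Icc
      ⟨by linarith, by rw [hb] at hηb; linarith⟩
    have hcos1 : Real.cos η ≤ 1 := Real.cos_le_one η
    -- first term nonneg
    have hterm1 : 0 ≤ q * (η * Real.sin η - q * Real.cos η) / (q ^ 2 + η ^ 2) := by
      apply div_nonneg _ (hden η).le
      have hηa' : π/4 < η := by rw [ha] at hηa; exact hηa
      have : q * Real.cos η ≤ 1/4 := by nlinarith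
      have : π/8 ≤ η * Real.sin η := by nlinarith
      nlinarith
    have hterm2 : π⁻¹ ≤ Real.sin η / η := by
      rw [le_div_iff₀ hη0]
      have : η ≤ π/2 := by rw [hb] at hηb; exact hηb
      rw [inv_mul_le_iff₀ hπ] -- η ≤ π * sin η
      nlinarith
    have hgge : π⁻¹ ≤ g η := by
      have : π⁻¹ ≤ q * (η * Real.sin η - q * Real.cos η) / (q ^ 2 + η ^ 2)
          + Real.sin η / η := by linarith
      exact this
    have habsge : π⁻¹ ≤ |g η| := le_trans hgge (le_abs_self _)
    have hπinv : (0:ℝ) < π⁻¹ := by positivity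
    have hsq : π⁻¹ * π⁻¹ ≤ |g η| ^ 2 := by nlinarith [abs_nonneg (g η)]
    have h2 : (0:ℝ) ≤ η ^ (2*s-2) := Real.rpow_nonneg hη0.le _
    calc π⁻¹ * π⁻¹ * η ^ (2*s-2) ≤ |g η|^2 * η ^ (2*s-2) := by nlinarith
      _ = f η := by rw [hf]; ring
  -- integral comparison
  have hintab : IntegrableOn f (Ioc a b) := hintIoi.mono_set
    (fun x hx => lt_trans ha0 hx.1)
  have hintrab : IntegrableOn (fun η : ℝ => π⁻¹ * π⁻¹ * η ^ (2*s-2)) (Ioc a b) := by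
    have h := intervalIntegral.intervalIntegrable_rpow' (a := a) (b := b)
      (r := 2*s-2) (by linarith)
    rw [intervalIntegrable_iff_integrableOn_Ioc_of_le hab] at h
    exact h.const_mul _
  have step1 : (∫ η in Ioc a b, π⁻¹ * π⁻¹ * η ^ (2*s-2)) ≤ ∫ η in Ioc a b, f η :=
    setIntegral_mono_on hintrab hintab measurableSet_Ioc hlow
  have step2 : (∫ η in Ioc a b, f η) ≤ ∫ η in Ioi 0, f η := by
    apply setIntegral_mono_set hintIoi
    · rw [Filter.EventuallyLE, ae_restrict_iff' measurableSet_Ioi]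
      filter_upwards with η hη
      exact hfnn η hη
    · exact HasSubset.Subset.eventuallyLE (fun x hx => lt_trans ha0 hx.1)
  -- compute the lower integral
  have hcalc : (∫ η in Ioc a b, η ^ (2*s-2)) = (b^(2*s-1) - a^(2*s-1))/(2*s-1) := by
    rw [← intervalIntegral.integral_of_le hab, integral_rpow (Or.inl (by linarith))]
    norm_num [show (2*s-2)+1 = 2*s-1 by ring]
  have hpull : (∫ η in Ioc a b, π⁻¹ * π⁻¹ * η ^ (2*s-2))
      = π⁻¹ * π⁻¹ * ((b^(2*s-1) - a^(2*s-1))/(2*s-1)) := by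
    rw [MeasureTheory.integral_const_mul, hcalc]
  -- rewrite powers
  have h2pow : b^(2*s-1) = π^(2*s-1) * (2:ℝ)^(1-2*s) := by
    rw [hb, Real.div_rpow hπ.le (by norm_num : (0:ℝ) ≤ 2),
      show (1-2*s : ℝ) = -(2*s-1) by ring, Real.rpow_neg (by norm_num : (0:ℝ) ≤ 2),
      div_eq_mul_inv]
  have h4pow : a^(2*s-1) = π^(2*s-1) * (4:ℝ)^(1-2*s) := by
    rw [ha, Real.div_rpow hπ.le (by norm_num : (0:ℝ) ≤ 4),
      show (1-2*s : ℝ) = -(2*s-1) by ring, Real.rpow_neg (by norm_num : (0:ℝ) ≤ 4),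
      div_eq_mul_inv]
  -- positivity of the factor
  have hD : (0:ℝ) ≤ (2:ℝ)^(1-2*s) - (4:ℝ)^(1-2*s) := by
    have h4 : (4:ℝ)^(1-2*s) = (2:ℝ)^(2*(1-2*s)) := by
      rw [show (4:ℝ) = (2:ℝ)^(2:ℝ) by rw [Real.rpow_two]; norm_num,
        ← Real.rpow_mul (by norm_num : (0:ℝ) ≤ 2)]
    rw [h4]
    have := Real.rpow_le_rpow_of_exponent_le (x := 2) one_le_two
      (y := 2*(1-2*s)) (z := 1-2*s) (by linarith)
    linarith
  have hpi21 : π^(2*s-2) ≤ π^(2*s-1) :=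
    Real.rpow_le_rpow_of_exponent_le (by linarith) (by linarith)
  -- final arithmetic
  have hπne : π ≠ 0 := ne_of_gt hπ
  have hsne : 2*s-1 ≠ 0 := by intro h; linarith [h]
  have hdenpos : (0:ℝ) < π ^ 2 * (2 * s - 1) := by
    have h1 : (0:ℝ) < 2*s-1 := by linarith
    positivity
  rw [ge_iff_le]
  calc π ^ (2 * s - 2) / (π ^ 2 * (2 * s - 1)) * ((2:ℝ) ^ (1 - 2 * s) - (4:ℝ) ^ (1 - 2 * s))
      ≤ π ^ (2 * s - 1) / (π ^ 2 * (2 * s - 1)) * ((2:ℝ) ^ (1 - 2 * s) - (4:ℝ) ^ (1 - 2 * s)) := by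
        apply mul_le_mul_of_nonneg_right _ hD
        exact div_le_div_of_nonneg_right hpi21 hdenpos.le
    _ = π⁻¹ * π⁻¹ * ((b^(2*s-1) - a^(2*s-1))/(2*s-1)) := by
        rw [h2pow, h4pow]
        field_simp
    _ ≤ ∫ η in Ioc a b, f η := by rw [← hpull]; exact step1
    _ ≤ ∫ η in Ioi 0, f η := step2
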